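/- arXiv:1710.07127 — 2 statements merged into one kernel-verified Lean document; each statement's English description precedes it below -/
import Mathlib

section
/- For every nonnegative integer n and every complex number z, ∑_{k=0}^{n} 2^{2k} · C(2n+1,2k) · B_{2k}(z) = ∑_{k=0}^{n} (2k+1) · 2^{2k} · C(2n+1,2k+1) · E_{2k}(z), where C(n,k) denotes the binomial coefficient. -/
open Finset

/-- The Bernoulli polynomial `B_n` evaluated at a complex number `z`,
with generating function `t·e^{zt}/(e^t−1) = ∑_{n≥0} B_n(z)·t^n/n!`. -/
noncomputable def bernoulliPoly (n : ℕ) (z : ℂ) : ℂ :=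
  Polynomial.aeval z (Polynomial.bernoulli n)

/-- The Euler polynomial `E_n` evaluated at a complex number `z`,
with generating function `2·e^{zt}/(e^t+1) = ∑_{n≥0} E_n(z)·t^n/n!`,
given by the explicit formula `E_n(z) = ∑_{k=0}^n 2^{-k} ∑_{j=0}^k (-1)^j C(k,j)(z+j)^n`. -/
noncomputable def eulerPoly (n : ℕ) (z : ℂ) : ℂ :=
  ∑ k ∈ range (n + 1), (1 / 2 ^ k : ℂ) *
    ∑ j ∈ range (k + 1), (-1) ^ j * (k.choose j : ℂ) * (z + j) ^ n

open Function
open scoped fwdDiff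

/-- iterated forward difference kills low-degree powers -/
lemma fwd_pow_eq_zero : ∀ m k : ℕ, m < k → (Δ_[(1:ℂ)])^[k] (fun x : ℂ => x ^ m) = 0 := by
  intro m
  induction m using Nat.strong_induction_on with
  | _ m IH =>
    have key : (Δ_[(1:ℂ)])^[m+1] (fun x : ℂ => x ^ m) = 0 := by
      have h1 : Δ_[(1:ℂ)] (fun x : ℂ => x ^ m)
          = ∑ i ∈ range m, (m.choose i : ℂ) • (fun x : ℂ => x ^ i) := by
        funext x
        simp only [fwdDiff, Finset.sum_apply, Pi.smul_apply, smul_eq_mul]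
        have := add_pow x (1:ℂ) m
        rw [Finset.sum_range_succ] at this
        simp only [one_pow, mul_one, Nat.choose_self, Nat.cast_one] at this
        rw [this]
        rw [add_sub_cancel_right]
        refine Finset.sum_congr rfl fun i _ => by ring
      rw [Function.iterate_succ_apply, h1]
      rw [fwdDiff_iter_finset_sum]
      refine Finset.sum_eq_zero fun i hi => ?_
      rw [fwdDiff_iter_const_smul, IH i (Finset.mem_range.mp hi) m (Finset.mem_range.mp hi)]
      simp
    intro k hk
    obtain ⟨j, rfl⟩ : ∃ j, k = j + (m + 1) := ⟨k - (m+1), by omega⟩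
    funext x
    rw [Function.iterate_add_apply]
    rw [key]
    have : ∀ j : ℕ, (Δ_[(1:ℂ)])^[j] (0 : ℂ → ℂ) = 0 := by
      intro j; induction j with
      | zero => rfl
      | succ j IHj =>
          rw [Function.iterate_succ_apply]
          have : Δ_[(1:ℂ)] (0 : ℂ → ℂ) = 0 := by funext y; simp [fwdDiff]
          rw [this, IHj]
    rw [this]

noncomputable def Sfd (k m : ℕ) (z : ℂ) : ℂ :=
  ∑ j ∈ range (k + 1), (-1) ^ j * (k.choose j : ℂ) * (z + j) ^ m

lemma Sfd_eq (k m : ℕ) (z : ℂ) :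
    Sfd k m z = (-1 : ℂ) ^ k * (Δ_[(1:ℂ)])^[k] (fun x : ℂ => x ^ m) z := by
  rw [fwdDiff_iter_eq_sum_shift, Finset.mul_sum, Sfd]
  refine Finset.sum_congr rfl fun j hj => ?_
  have hjk : j ≤ k := by exact Nat.lt_succ_iff.mp (Finset.mem_range.mp hj)
  have h1 : ((-1:ℤ)^(k-j) * (k.choose j : ℤ)) • ((z + j • (1:ℂ)) ^ m)
      = (-1:ℂ)^(k-j) * (k.choose j : ℂ) * (z + j)^m := by
    rw [zsmul_eq_mul]
    push_cast
    rw [nsmul_eq_mul, mul_one]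
  rw [h1, ← mul_assoc, ← mul_assoc]
  congr 2
  have : (-1:ℂ)^k = (-1:ℂ)^(k-j) * (-1:ℂ)^j := by
    rw [← pow_add]; congr 1; omega
  rw [this]
  have h2 : ((-1:ℂ)^(k-j))^2 = 1 := by
    rw [← pow_mul, mul_comm, pow_mul]; simp
  calc (-1:ℂ)^j = 1 * (-1:ℂ)^j := by ring
    _ = ((-1:ℂ)^(k-j))^2 * (-1:ℂ)^j := by rw [h2]
    _ = (-1:ℂ)^(k-j) * (-1:ℂ)^j * (-1:ℂ)^(k-j) := by ring

lemma Sfd_vanish {k m : ℕ} (h : m < k) (z : ℂ) : Sfd k m z = 0 := by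
  rw [Sfd_eq, fwd_pow_eq_zero m k h]
  simp

lemma eulerPoly_eq (n : ℕ) (z : ℂ) :
    eulerPoly n z = ∑ k ∈ range (n + 1), (1 / 2 ^ k : ℂ) * Sfd k n z := rfl

lemma Sfd_succ (k m : ℕ) (z : ℂ) : Sfd (k+1) m z = Sfd k m z - Sfd k m (z+1) := by
  have expand : Sfd (k+1) m z
      = (∑ i ∈ range (k+1), ((-1:ℂ)^(i+1) * (k.choose (i+1) : ℂ) * (z + ((i+1 : ℕ):ℂ))^m
          + (-(-1:ℂ)^i) * (k.choose i : ℂ) * ((z+1) + (i:ℂ))^m))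
        + (-1:ℂ)^(0:ℕ) * ((k+1).choose 0 : ℂ) * (z + ((0:ℕ):ℂ))^m := by
    rw [Sfd, Finset.sum_range_succ']
    congr 1
    refine Finset.sum_congr rfl fun i _ => ?_
    rw [Nat.choose_succ_succ]
    push_cast
    ring
  have hB : (∑ i ∈ range (k+1), (-1:ℂ)^(i+1) * (k.choose (i+1) : ℂ) * (z + ((i+1:ℕ):ℂ))^m)
      + (-1:ℂ)^(0:ℕ) * ((k+1).choose 0 : ℂ) * (z + ((0:ℕ):ℂ))^m = Sfd k m z := by
    have h2 := Finset.sum_range_succ' (fun j => (-1:ℂ)^j * (k.choose j : ℂ) * (z + (j:ℂ))^m) (k+1)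
    rw [Finset.sum_range_succ] at h2
    simp only [Nat.choose_succ_self, Nat.cast_zero, mul_zero, zero_mul, add_zero, mul_one,
      Nat.choose_zero_right, Nat.cast_one] at h2 ⊢
    rw [Sfd]; exact h2.symm
  have hA : ∑ i ∈ range (k+1), (-(-1:ℂ)^i) * (k.choose i : ℂ) * ((z+1) + (i:ℂ))^m
      = - Sfd k m (z+1) := by
    rw [Sfd, ← Finset.sum_neg_distrib]
    exact Finset.sum_congr rfl fun i _ => by ring
  rw [expand, Finset.sum_add_distrib, add_right_comm, hB, hA]
  ring

lemma euler_reflect (n : ℕ) (z : ℂ) : eulerPoly n z + eulerPoly n (z+1) = 2 * z^n := by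
  have h1 : eulerPoly n z + eulerPoly n (z+1)
      = ∑ k ∈ range (n+1), (2 * ((1/2^k:ℂ) * Sfd k n z) - 2 * ((1/2^(k+1):ℂ) * Sfd (k+1) n z)) := by
    rw [eulerPoly_eq, eulerPoly_eq, ← Finset.sum_add_distrib]
    refine Finset.sum_congr rfl fun k _ => ?_
    have hs : Sfd k n (z+1) = Sfd k n z - Sfd (k+1) n z := by rw [Sfd_succ]; ring
    rw [hs]
    have h2 : (2:ℂ)^(k+1) = 2 * 2^k := by ring
    rw [h2]
    field_simp
    ring
  have hzero : Sfd 0 n z = z ^ n := by simp [Sfd]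
  rw [h1, Finset.sum_range_sub' (fun k => 2 * ((1/2^k:ℂ) * Sfd k n z)) (n+1)]
  simp only [Sfd_vanish (Nat.lt_succ_self n), hzero]
  norm_num

lemma Sfd_add (k N : ℕ) (x y : ℂ) :
    Sfd k N (x + y) = ∑ m ∈ range (N+1), (N.choose m : ℂ) * Sfd k m x * y^(N-m) := by
  rw [Sfd]
  have hj : ∀ j : ℕ, ((x+y) + (j:ℂ))^N
      = ∑ m ∈ range (N+1), (x+(j:ℂ))^m * y^(N-m) * (N.choose m : ℂ) := by
    intro j
    rw [show (x+y)+(j:ℂ) = (x+(j:ℂ)) + y by ring, add_pow]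
  simp_rw [hj, Finset.mul_sum]
  rw [Finset.sum_comm]
  refine Finset.sum_congr rfl fun m _ => ?_
  rw [Sfd, Finset.mul_sum, Finset.sum_mul]
  exact Finset.sum_congr rfl fun j _ => by ring

lemma euler_add (N : ℕ) (x y : ℂ) :
    eulerPoly N (x + y) = ∑ m ∈ range (N+1), (N.choose m : ℂ) * eulerPoly m x * y^(N-m) := by
  rw [eulerPoly_eq]
  simp_rw [Sfd_add, Finset.mul_sum]
  rw [Finset.sum_comm]
  refine Finset.sum_congr rfl fun m hm => ?_
  have hmN : m ≤ N := Nat.lt_succ_iff.mp (Finset.mem_range.mp hm)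
  have hsub : ∑ k ∈ range (m+1), (1/2^k : ℂ) * Sfd k m x
      = ∑ k ∈ range (N+1), (1/2^k : ℂ) * Sfd k m x := by
    refine Finset.sum_subset (by simp [Finset.range_subset]; omega) ?_
    intro k hk hk2
    rw [Sfd_vanish (by simp at hk hk2; omega), mul_zero]
  rw [eulerPoly_eq, hsub, Finset.mul_sum, Finset.sum_mul]
  exact Finset.sum_congr rfl fun k _ => by ring

lemma bernoulliPoly_eq (N : ℕ) (z : ℂ) :
    bernoulliPoly N z
      = ∑ i ∈ range (N+1), ((bernoulli i : ℚ) : ℂ) * (N.choose i : ℂ) * z ^ (N-i) := by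
  rw [bernoulliPoly, Polynomial.bernoulli, map_sum]
  refine Finset.sum_congr rfl fun i _ => ?_
  rw [Polynomial.aeval_monomial, map_mul, eq_ratCast, map_natCast]

lemma bern_add (N : ℕ) (x y : ℂ) :
    bernoulliPoly N (x + y)
      = ∑ k ∈ range (N+1), (N.choose k : ℂ) * bernoulliPoly k x * y^(N-k) := by
  have key : bernoulliPoly N (x + y)
      = ∑ i ∈ Finset.Ico 0 (N+1), ∑ k ∈ Finset.Ico i (N+1),
          ((bernoulli i : ℚ) : ℂ) * (N.choose i : ℂ) * ((N-i).choose (k-i) : ℂ)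
            * x^(k-i) * y^(N-k) := by
    rw [bernoulliPoly_eq]
    refine Finset.sum_congr (by rw [Finset.range_eq_Ico]) fun i hi => ?_
    have hiN : i ≤ N := Nat.lt_succ_iff.mp (Finset.mem_Ico.mp hi).2
    rw [add_pow, Finset.sum_Ico_eq_sum_range]
    have hr : N + 1 - i = (N - i) + 1 := by omega
    rw [hr, Finset.mul_sum]
    refine Finset.sum_congr rfl fun t ht => ?_
    have htN : t ≤ N - i := Nat.lt_succ_iff.mp (Finset.mem_range.mp ht)
    have h1 : i + t - i = t := by omega
    have h2 : N - (i + t) = N - i - t := by omega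
    rw [h1, h2]
    ring
  rw [key, Finset.sum_Ico_Ico_comm]
  refine Finset.sum_congr (by rw [Finset.range_eq_Ico]) fun k hk => ?_
  have hkN : k ≤ N := Nat.lt_succ_iff.mp (Finset.mem_range.mp hk)
  rw [bernoulliPoly_eq, Finset.mul_sum, Finset.sum_mul]
  refine Finset.sum_congr (by rw [Finset.range_eq_Ico]) fun i hi => ?_
  have hik : i ≤ k := Nat.lt_succ_iff.mp (Finset.mem_range.mp hi)
  have hnat : N.choose k * k.choose i = N.choose i * (N-i).choose (k-i) := Nat.choose_mul hik
  have hch : (N.choose i : ℂ) * ((N-i).choose (k-i) : ℂ) = (N.choose k : ℂ) * (k.choose i : ℂ) := by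
    exact_mod_cast congrArg (Nat.cast : ℕ → ℂ) hnat.symm
  linear_combination (((bernoulli i : ℚ) : ℂ) * x^(k-i) * y^(N-k)) * hch

lemma bern_comp (n : ℕ) : (Polynomial.bernoulli n).comp (Polynomial.X + 1)
    = Polynomial.bernoulli n + (n : ℚ) • Polynomial.X ^ (n-1) := by
  apply Polynomial.funext
  intro x
  rw [Polynomial.eval_comp, Polynomial.eval_add, Polynomial.eval_X, Polynomial.eval_one,
    add_comm x 1, Polynomial.bernoulli_eval_one_add]
  simp [smul_eq_mul]

lemma bern_diff (N : ℕ) (x : ℂ) :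
    bernoulliPoly N (x+1) = bernoulliPoly N x + N * x^(N-1) := by
  have h : Polynomial.aeval (x+1) (Polynomial.bernoulli N)
      = Polynomial.aeval x ((Polynomial.bernoulli N).comp (Polynomial.X + 1)) := by
    rw [Polynomial.aeval_comp]; simp
  rw [bernoulliPoly, h, bern_comp, map_add, bernoulliPoly]
  congr 1
  rw [map_smul, map_pow, Polynomial.aeval_X, Algebra.smul_def]
  simp

lemma bern_add2 (N : ℕ) (x ε : ℂ) :
    (2:ℂ)^N * bernoulliPoly N (x + ε/2)
      = ∑ k ∈ range (N+1), (N.choose k : ℂ) * 2^k * bernoulliPoly k x * ε^(N-k) := by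
  rw [bern_add N x (ε/2), Finset.mul_sum]
  refine Finset.sum_congr rfl fun k hk => ?_
  have hkN : k ≤ N := Nat.lt_succ_iff.mp (Finset.mem_range.mp hk)
  have h2 : (2:ℂ)^N = 2^k * 2^(N-k) := by rw [← pow_add]; congr 1; omega
  have h3 : (2:ℂ)^(N-k) ≠ 0 := pow_ne_zero _ two_ne_zero
  rw [div_pow, h2]
  field_simp

lemma euler_add2 (N : ℕ) (x ε : ℂ) :
    (2:ℂ)^N * eulerPoly N (x + ε/2)
      = ∑ k ∈ range (N+1), (N.choose k : ℂ) * 2^k * eulerPoly k x * ε^(N-k) := by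
  rw [euler_add N x (ε/2), Finset.mul_sum]
  refine Finset.sum_congr rfl fun k hk => ?_
  have hkN : k ≤ N := Nat.lt_succ_iff.mp (Finset.mem_range.mp hk)
  have h2 : (2:ℂ)^N = 2^k * 2^(N-k) := by rw [← pow_add]; congr 1; omega
  have h3 : (2:ℂ)^(N-k) ≠ 0 := pow_ne_zero _ two_ne_zero
  rw [div_pow, h2]
  field_simp

lemma sum_range_even_odd (g : ℕ → ℂ) (n : ℕ) :
    ∑ m ∈ range (2*n+2), g m = ∑ k ∈ range (n+1), (g (2*k) + g (2*k+1)) := by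
  induction n with
  | zero => simp [Finset.sum_range_succ]
  | succ n IH =>
      have h1 : ∑ m ∈ range (2*(n+1)+2), g m
          = (∑ m ∈ range (2*n+2), g m) + g (2*n+2) + g (2*n+3) := by
        rw [show 2*(n+1)+2 = (2*n+2) + 1 + 1 from by ring, Finset.sum_range_succ,
          Finset.sum_range_succ]
      have h2 : ∑ k ∈ range (n+1+1), (g (2*k) + g (2*k+1))
          = (∑ k ∈ range (n+1), (g (2*k) + g (2*k+1))) + (g (2*(n+1)) + g (2*(n+1)+1)) :=
        Finset.sum_range_succ _ _
      rw [h1, h2, IH, show 2*(n+1) = 2*n+2 from by ring]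
      rw [show 2*n+2+1 = 2*n+3 from by omega]
      ring

theorem key_bern (n : ℕ) (z : ℂ) :
    ∑ k ∈ range (n+1), (2:ℂ)^(2*k) * ((2*n+1).choose (2*k) : ℂ) * bernoulliPoly (2*k) z
      = ((2*n+1 : ℕ):ℂ) * 2^(2*n) * (z - 1/2)^(2*n) := by
  have h1 := bern_add2 (2*n+1) z 1
  have h2 := bern_add2 (2*n+1) z (-1)
  rw [show z + (-1)/2 = z - 1/2 from by ring] at h2
  rw [show z + 1/2 = (z - 1/2) + 1 from by ring] at h1
  rw [bern_diff (2*n+1) (z - 1/2), show (2*n+1) - 1 = 2*n from by omega] at h1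
  -- h1 - h2 :
  have hD : (2:ℂ)^(2*n+1) * (((2*n+1 : ℕ):ℂ) * (z - 1/2)^(2*n))
      = ∑ m ∈ range (2*n+1+1), ((2*n+1).choose m : ℂ) * 2^m * bernoulliPoly m z
          * ((1:ℂ)^(2*n+1-m) - (-1:ℂ)^(2*n+1-m)) := by
    calc (2:ℂ)^(2*n+1) * (((2*n+1 : ℕ):ℂ) * (z - 1/2)^(2*n))
        = (2:ℂ)^(2*n+1) * (bernoulliPoly (2*n+1) (z-1/2) + ((2*n+1 : ℕ):ℂ) * (z - 1/2)^(2*n))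
          - (2:ℂ)^(2*n+1) * bernoulliPoly (2*n+1) (z-1/2) := by ring
      _ = _ := by
            rw [h1, h2, ← Finset.sum_sub_distrib]
            exact Finset.sum_congr rfl fun m _ => by ring
  rw [show 2*n+1+1 = 2*n+2 from by ring, sum_range_even_odd] at hD
  have hsplit : ∑ k ∈ range (n+1),
      (((2*n+1).choose (2*k) : ℂ) * 2^(2*k) * bernoulliPoly (2*k) z
          * ((1:ℂ)^(2*n+1-2*k) - (-1:ℂ)^(2*n+1-2*k))
        + ((2*n+1).choose (2*k+1) : ℂ) * 2^(2*k+1) * bernoulliPoly (2*k+1) z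
          * ((1:ℂ)^(2*n+1-(2*k+1)) - (-1:ℂ)^(2*n+1-(2*k+1))))
      = 2 * ∑ k ∈ range (n+1),
          (2:ℂ)^(2*k) * ((2*n+1).choose (2*k) : ℂ) * bernoulliPoly (2*k) z := by
    rw [Finset.mul_sum]
    refine Finset.sum_congr rfl fun k hk => ?_
    have hkn : k ≤ n := Nat.lt_succ_iff.mp (Finset.mem_range.mp hk)
    have ho : (-1:ℂ)^(2*n+1-2*k) = -1 := Odd.neg_one_pow ⟨n-k, by omega⟩
    have he : (-1:ℂ)^(2*n+1-(2*k+1)) = 1 := Even.neg_one_pow ⟨n-k, by omega⟩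
    rw [ho, he, one_pow, one_pow]
    ring
  rw [hsplit] at hD
  have h2ne : (2:ℂ) ≠ 0 := two_ne_zero
  apply mul_left_cancel₀ h2ne
  rw [← hD]
  push_cast
  ring

theorem key_euler (n : ℕ) (z : ℂ) :
    ∑ k ∈ range (n+1), ((2*n).choose (2*k) : ℂ) * 2^(2*k) * eulerPoly (2*k) z
      = 2^(2*n) * (z - 1/2)^(2*n) := by
  have h1 := euler_add2 (2*n) z 1
  have h2 := euler_add2 (2*n) z (-1)
  rw [show z + (-1)/2 = z - 1/2 from by ring] at h2
  rw [show z + 1/2 = (z - 1/2) + 1 from by ring] at h1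
  have hrefl := euler_reflect (2*n) (z - 1/2)
  -- sum h1 + h2
  have hD : (2:ℂ)^(2*n) * (2 * (z - 1/2)^(2*n))
      = ∑ m ∈ range (2*n+1), ((2*n).choose m : ℂ) * 2^m * eulerPoly m z
          * ((1:ℂ)^(2*n-m) + (-1:ℂ)^(2*n-m)) := by
    calc (2:ℂ)^(2*n) * (2 * (z - 1/2)^(2*n))
        = (2:ℂ)^(2*n) * eulerPoly (2*n) ((z-1/2)+1) + (2:ℂ)^(2*n) * eulerPoly (2*n) (z-1/2) := by
          rw [← mul_add, add_comm (eulerPoly (2*n) ((z-1/2)+1)), hrefl]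
      _ = _ := by
          rw [h1, h2, ← Finset.sum_add_distrib]
          exact Finset.sum_congr rfl fun m _ => by ring
  -- extend to even length and split
  have hext : ∑ m ∈ range ((2*n+1)+1), ((2*n).choose m : ℂ) * 2^m * eulerPoly m z
          * ((1:ℂ)^(2*n-m) + (-1:ℂ)^(2*n-m))
      = ∑ m ∈ range (2*n+1), ((2*n).choose m : ℂ) * 2^m * eulerPoly m z
          * ((1:ℂ)^(2*n-m) + (-1:ℂ)^(2*n-m)) := by
    rw [Finset.sum_range_succ, Nat.choose_succ_self]
    simp
  rw [← hext, show (2*n+1)+1 = 2*n+2 from by omega, sum_range_even_odd] at hD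
  have hsplit : ∑ k ∈ range (n+1),
      (((2*n).choose (2*k) : ℂ) * 2^(2*k) * eulerPoly (2*k) z
          * ((1:ℂ)^(2*n-2*k) + (-1:ℂ)^(2*n-2*k))
        + ((2*n).choose (2*k+1) : ℂ) * 2^(2*k+1) * eulerPoly (2*k+1) z
          * ((1:ℂ)^(2*n-(2*k+1)) + (-1:ℂ)^(2*n-(2*k+1))))
      = 2 * ∑ k ∈ range (n+1),
          ((2*n).choose (2*k) : ℂ) * 2^(2*k) * eulerPoly (2*k) z := by
    rw [Finset.mul_sum]
    refine Finset.sum_congr rfl fun k hk => ?_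
    have hkn : k ≤ n := Nat.lt_succ_iff.mp (Finset.mem_range.mp hk)
    have he : (-1:ℂ)^(2*n-2*k) = 1 := Even.neg_one_pow ⟨n-k, by omega⟩
    rcases Nat.lt_or_ge k n with hlt | hge
    · have ho : (-1:ℂ)^(2*n-(2*k+1)) = -1 := Odd.neg_one_pow ⟨n-k-1, by omega⟩
      rw [ho, he, one_pow, one_pow]
      ring
    · have hch : ((2*n).choose (2*k+1) : ℂ) = 0 := by
        rw [Nat.choose_eq_zero_of_lt (by omega)]; simp
      rw [he, hch, one_pow]
      ring
  rw [hsplit] at hD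
  apply mul_left_cancel₀ (two_ne_zero (α := ℂ))
  rw [← hD]
  ring

theorem stmt7 (n : ℕ) (z : ℂ) :
    ∑ k ∈ range (n + 1), (2 : ℂ) ^ (2 * k) * ((2 * n + 1).choose (2 * k) : ℂ) *
        bernoulliPoly (2 * k) z
      = ∑ k ∈ range (n + 1), (2 * (k : ℂ) + 1) * 2 ^ (2 * k) *
        ((2 * n + 1).choose (2 * k + 1) : ℂ) * eulerPoly (2 * k) z := by
  rw [key_bern]
  have hR : ∑ k ∈ range (n + 1), (2 * (k : ℂ) + 1) * 2 ^ (2 * k) *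
        ((2 * n + 1).choose (2 * k + 1) : ℂ) * eulerPoly (2 * k) z
      = ((2*n+1 : ℕ):ℂ) * ∑ k ∈ range (n+1),
          ((2*n).choose (2*k) : ℂ) * 2^(2*k) * eulerPoly (2*k) z := by
    rw [Finset.mul_sum]
    refine Finset.sum_congr rfl fun k _ => ?_
    have hnat : (2*n+1) * ((2*n).choose (2*k)) = (2*n+1).choose (2*k+1) * (2*k+1) :=
      Nat.add_one_mul_choose_eq (2*n) (2*k)
    have hc : ((2*n+1 : ℕ):ℂ) * ((2*n).choose (2*k) : ℂ)
        = ((2*n+1).choose (2*k+1) : ℂ) * ((2*k+1 : ℕ):ℂ) := by exact_mod_cast congrArg (Nat.cast : ℕ → ℂ) hnat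
    push_cast at hc ⊢
    linear_combination (-(2:ℂ)^(2*k) * eulerPoly (2*k) z) * hc
  rw [hR, key_euler]
  ring
end

section
/- For every nonnegative integer n and every complex number z, ∑_{k=0}^{n} (4^{2k}/(2(n-k)+1)) · C(2n,2k) · B_{2k}(z) = ∑_{k=0}^{n} 2^{2k} · C(2n,2k) · E_{2k}(2z) − ∑_{k=0}^{n-1} 2^{2k+1} · C(2n,2k+1) · E_{2k+1}(2z), where C(n,k) denotes the binomial coefficient. -/
open Finset

open Polynomial


lemma key_rec (k : ℕ) (f : ℕ → ℂ) :
    ∑ j ∈ range (k+2), (-1:ℂ)^j * ((k+1).choose j : ℂ) * f j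
      = ∑ j ∈ range (k+1), (-1:ℂ)^j * (k.choose j : ℂ) * f j
        - ∑ j ∈ range (k+1), (-1:ℂ)^j * (k.choose j : ℂ) * f (j+1) := by
  rw [Finset.sum_range_succ' _ (k+1)]
  have h1 : ∀ i, ((k+1).choose (i+1) : ℂ) = (k.choose i : ℂ) + (k.choose (i+1) : ℂ) := by
    intro i; exact_mod_cast congrArg (Nat.cast : ℕ → ℂ) (Nat.choose_succ_succ k i)
  have h2 : ∑ j ∈ range (k+1), (-1:ℂ)^j * (k.choose j : ℂ) * f j
      = -∑ i ∈ range (k+1), (-1:ℂ)^i * (k.choose (i+1) : ℂ) * f (i+1) + f 0 := by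
    rw [Finset.sum_range_succ' _ k]
    rw [Finset.sum_range_succ _ k]
    simp [Nat.choose_succ_self, pow_succ]
  rw [h2]
  simp only [h1]
  rw [Finset.sum_congr rfl (fun i _ => by ring :
    ∀ i ∈ range (k+1), (-1:ℂ)^(i+1) * ((k.choose i : ℂ) + (k.choose (i+1) : ℂ)) * f (i+1)
      = -((-1:ℂ)^i * (k.choose i : ℂ) * f (i+1)) + -((-1:ℂ)^i * (k.choose (i+1) : ℂ) * f (i+1)))]
  rw [Finset.sum_add_distrib]
  simp
  ring

noncomputable def Sc (k r : ℕ) : ℂ := ∑ j ∈ range (k+1), (-1:ℂ)^j * (k.choose j : ℂ) * (j:ℂ)^r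

lemma Sc_vanish : ∀ k r : ℕ, r < k → Sc k r = 0 := by
  intro k
  induction k with
  | zero => intro r hr; omega
  | succ k ih =>
    intro r hr
    have hrec : Sc (k+1) r = Sc k r - ∑ s ∈ range (r+1), (r.choose s : ℂ) * Sc k s := by
      have := key_rec k (fun j => (j:ℂ)^r)
      simp only [Sc]
      rw [show k+1+1 = k+2 from rfl, this]
      congr 1
      have expand : ∀ j : ℕ, ((j:ℂ)+1)^r = ∑ s ∈ range (r+1), (j:ℂ)^s * (r.choose s : ℂ) := by
        intro j
        rw [add_pow]
        exact Finset.sum_congr rfl (fun s _ => by simp)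
      calc ∑ j ∈ range (k+1), (-1:ℂ)^j * (k.choose j : ℂ) * ((j+1 : ℕ):ℂ)^r
          = ∑ j ∈ range (k+1), ∑ s ∈ range (r+1),
              (r.choose s : ℂ) * ((-1:ℂ)^j * (k.choose j : ℂ) * (j:ℂ)^s) := by
            refine Finset.sum_congr rfl (fun j _ => ?_)
            push_cast
            rw [expand j, Finset.mul_sum]
            exact Finset.sum_congr rfl (fun s _ => by ring)
        _ = ∑ s ∈ range (r+1), (r.choose s : ℂ) * Sc k s := by
            rw [Finset.sum_comm]
            exact Finset.sum_congr rfl (fun s _ => by rw [← Finset.mul_sum]; rfl)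
    rw [hrec]
    rcases Nat.lt_or_ge r k with h | h
    · rw [ih r h, Finset.sum_eq_zero (fun s hs => by
        rw [ih s (by have := mem_range.mp hs; omega), mul_zero])]
      ring
    · have hrk : r = k := by omega
      subst hrk
      rw [Finset.sum_range_succ]
      rw [Finset.sum_eq_zero (fun s hs => by rw [ih s (mem_range.mp hs), mul_zero])]
      simp

noncomputable def Dk (k m : ℕ) (z : ℂ) : ℂ :=
  ∑ j ∈ range (k+1), (-1:ℂ)^j * (k.choose j : ℂ) * (z + j)^m

lemma Dk_vanish (k m : ℕ) (z : ℂ) (h : m < k) : Dk k m z = 0 := by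
  have expand : ∀ j : ℕ, (z + (j:ℂ))^m
      = ∑ s ∈ range (m+1), (m.choose s : ℂ) * z^(m-s) * (j:ℂ)^s := by
    intro j
    rw [add_comm z, add_pow]
    exact Finset.sum_congr rfl (fun s _ => by ring)
  have : Dk k m z = ∑ s ∈ range (m+1), (m.choose s : ℂ) * z^(m-s) * Sc k s := by
    unfold Dk
    calc ∑ j ∈ range (k+1), (-1:ℂ)^j * (k.choose j : ℂ) * (z + j)^m
        = ∑ j ∈ range (k+1), ∑ s ∈ range (m+1),
            (m.choose s : ℂ) * z^(m-s) * ((-1:ℂ)^j * (k.choose j : ℂ) * (j:ℂ)^s) := by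
          refine Finset.sum_congr rfl (fun j _ => ?_)
          rw [expand j, Finset.mul_sum]
          exact Finset.sum_congr rfl (fun s _ => by ring)
      _ = _ := by
          rw [Finset.sum_comm]
          exact Finset.sum_congr rfl (fun s _ => by rw [← Finset.mul_sum]; rfl)
  rw [this, Finset.sum_eq_zero (fun s hs => by
    rw [Sc_vanish k s (by have := mem_range.mp hs; omega), mul_zero])]

lemma Dk_rec (k m : ℕ) (z : ℂ) : Dk (k+1) m z = Dk k m z - Dk k m (z+1) := by
  have := key_rec k (fun j => (z + j)^m)
  unfold Dk
  rw [show k+1+1 = k+2 from rfl, this]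
  congr 1
  refine Finset.sum_congr rfl (fun j _ => by push_cast; ring_nf)

lemma eulerPoly_eq_Dk (n : ℕ) (z : ℂ) :
    eulerPoly n z = ∑ k ∈ range (n+1), (1/2^k : ℂ) * Dk k n z := rfl

lemma eulerPoly_ext (n K : ℕ) (h : n ≤ K) (z : ℂ) :
    eulerPoly n z = ∑ k ∈ range (K+1), (1/2^k : ℂ) * Dk k n z := by
  rw [eulerPoly_eq_Dk]
  apply Finset.sum_subset (by apply Finset.range_subset_range.mpr; omega)
  intro x hx hnx
  rw [Dk_vanish x n z (by simp only [mem_range] at hx hnx; omega), mul_zero]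

lemma eulerPoly_funceq (n : ℕ) (x : ℂ) :
    eulerPoly n (x+1) + eulerPoly n x = 2 * x^n := by
  have step : ∀ k, (1/2^k : ℂ) * Dk k n (x+1) + (1/2^k : ℂ) * Dk k n x
      = (fun k => (2:ℂ)/2^k * Dk k n x) k - (fun k => (2:ℂ)/2^k * Dk k n x) (k+1) := by
    intro k
    simp only
    rw [Dk_rec k n x, pow_succ]
    have h2 : (2:ℂ)^k ≠ 0 := pow_ne_zero _ two_ne_zero
    field_simp
    ring
  rw [eulerPoly_eq_Dk, eulerPoly_eq_Dk, ← Finset.sum_add_distrib]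
  rw [Finset.sum_congr rfl (fun k _ => step k), Finset.sum_range_sub']
  rw [Dk_vanish (n+1) n x (by omega), mul_zero, sub_zero]
  simp [Dk]

lemma bernoulliPoly_def (N : ℕ) (z : ℂ) :
    bernoulliPoly N z = ∑ i ∈ range (N+1),
      (algebraMap ℚ ℂ (_root_.bernoulli i)) * (N.choose i : ℂ) * z^(N-i) := by
  unfold bernoulliPoly Polynomial.bernoulli
  rw [map_sum]
  refine Finset.sum_congr rfl (fun i _ => ?_)
  rw [Polynomial.aeval_monomial, map_mul]
  simp

lemma bernoulliPoly_add (N : ℕ) (x y : ℂ) :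
    bernoulliPoly N (x + y)
      = ∑ m ∈ range (N+1), (N.choose m : ℂ) * bernoulliPoly m x * y^(N-m) := by
  simp only [bernoulliPoly_def]
  have hL : ∑ i ∈ range (N+1),
        algebraMap ℚ ℂ (_root_.bernoulli i) * (N.choose i:ℂ) * (x+y)^(N-i)
      = ∑ p ∈ (range (N+1)).sigma (fun i => range (N-i+1)),
          algebraMap ℚ ℂ (_root_.bernoulli p.1) * (N.choose p.1:ℂ) *
            (x^p.2 * y^(N-p.1-p.2) * ((N-p.1).choose p.2 : ℂ)) := by
    rw [Finset.sum_sigma]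
    refine Finset.sum_congr rfl fun i _ => ?_
    rw [add_pow, Finset.mul_sum]
  have hR : ∑ m ∈ range (N+1), (N.choose m : ℂ) *
        (∑ i ∈ range (m+1), algebraMap ℚ ℂ (_root_.bernoulli i) * (m.choose i:ℂ) * x^(m-i))
          * y^(N-m)
      = ∑ q ∈ (range (N+1)).sigma (fun m => range (m+1)),
          (N.choose q.1 : ℂ) *
            (algebraMap ℚ ℂ (_root_.bernoulli q.2) * (q.1.choose q.2:ℂ) * x^(q.1-q.2))
              * y^(N-q.1) := by
    rw [Finset.sum_sigma]
    refine Finset.sum_congr rfl fun m _ => ?_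
    rw [Finset.mul_sum, Finset.sum_mul]
  rw [hL, hR]
  refine Finset.sum_nbij' (fun p => ⟨p.1 + p.2, p.1⟩) (fun q => ⟨q.2, q.1 - q.2⟩)
    ?_ ?_ ?_ ?_ ?_
  · rintro ⟨i, u⟩ hp
    simp only [Finset.mem_sigma, Finset.mem_range] at hp ⊢
    omega
  · rintro ⟨m, i⟩ hq
    simp only [Finset.mem_sigma, Finset.mem_range] at hq ⊢
    omega
  · rintro ⟨i, u⟩ hp
    simp only [Finset.mem_sigma, Finset.mem_range] at hp
    show (⟨i, i + u - i⟩ : (_ : ℕ) × ℕ) = ⟨i, u⟩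
    simp
  · rintro ⟨m, i⟩ hq
    simp only [Finset.mem_sigma, Finset.mem_range] at hq
    show (⟨i + (m - i), i⟩ : (_ : ℕ) × ℕ) = ⟨m, i⟩
    have h : i + (m - i) = m := by omega
    rw [h]
  · rintro ⟨i, u⟩ hp
    simp only [Finset.mem_sigma, Finset.mem_range] at hp
    have h1 : i + u ≤ N := by omega
    have h2 : i ≤ i + u := Nat.le_add_right i u
    have hchoose : (N.choose (i+u) : ℂ) * ((i+u).choose i : ℂ)
        = (N.choose i : ℂ) * ((N-i).choose ((i+u)-i) : ℂ) := by
      exact_mod_cast congrArg (Nat.cast : ℕ → ℂ) (Nat.choose_mul (n := N) h2)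
    simp only
    rw [add_tsub_cancel_left] at hchoose
    have e1 : (i+u) - i = u := add_tsub_cancel_left i u
    have e2 : N - i - u = N - (i+u) := by omega
    rw [e1, e2] at *
    calc algebraMap ℚ ℂ (_root_.bernoulli i) * (N.choose i:ℂ) *
          (x^u * y^(N-(i+u)) * ((N-i).choose u : ℂ))
        = (N.choose i : ℂ) * ((N-i).choose u : ℂ) *
            (algebraMap ℚ ℂ (_root_.bernoulli i) * x^u * y^(N-(i+u))) := by ring
      _ = (N.choose (i+u) : ℂ) * ((i+u).choose i : ℂ) *
            (algebraMap ℚ ℂ (_root_.bernoulli i) * x^u * y^(N-(i+u))) := by rw [hchoose]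
      _ = _ := by rw [e1]; ring

lemma bernoulliPoly_zero' (z : ℂ) : bernoulliPoly 0 z = 1 := by
  simp [bernoulliPoly]

lemma bernoulliPoly_one_add (N : ℕ) (y : ℂ) :
    bernoulliPoly N (y + 1) = bernoulliPoly N y + N * y^(N-1) := by
  cases N with
  | zero => simp [bernoulliPoly_zero']
  | succ n =>
    rw [bernoulliPoly_add (n+1) y 1]
    rw [Finset.sum_range_succ]
    have hsum : ∑ m ∈ range (n+1), ((n+1).choose m : ℂ) * bernoulliPoly m y * 1^(n+1-m)
        = ((n:ℂ)+1) * y^n := by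
      have h0 := congrArg (Polynomial.aeval y : ℚ[X] →ₐ[ℚ] ℂ) (Polynomial.sum_bernoulli n)
      rw [map_sum] at h0
      simp only [Polynomial.aeval_monomial, map_smul, smul_eq_mul, Polynomial.aeval_def] at h0
      calc ∑ m ∈ range (n+1), ((n+1).choose m : ℂ) * bernoulliPoly m y * 1^(n+1-m)
          = ∑ m ∈ range (n+1), ((n+1).choose m : ℚ) • bernoulliPoly m y := by
            refine Finset.sum_congr rfl fun m _ => ?_
            rw [one_pow, mul_one]
            rw [Rat.smul_def]
            push_cast
            ring
        _ = ((n:ℂ)+1) * y^n := by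
            have : ∀ m, ((n+1).choose m : ℚ) • bernoulliPoly m y
                = Polynomial.aeval y (((n+1).choose m : ℚ) • Polynomial.bernoulli m) := by
              intro m; rw [map_smul]; rfl
            rw [Finset.sum_congr rfl (fun m _ => this m), ← map_sum,
              Polynomial.sum_bernoulli, Polynomial.aeval_monomial]
            push_cast
            ring
    rw [hsum]
    simp only [Nat.choose_self, Nat.cast_one, Nat.sub_self, pow_zero, one_pow, mul_one, one_mul,
      Nat.add_sub_cancel]
    push_cast
    ring

noncomputable def EPpoly (n : ℕ) : Polynomial ℂ :=
  ∑ k ∈ range (n + 1), Polynomial.C (1 / 2 ^ k : ℂ) *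
    ∑ j ∈ range (k + 1),
      Polynomial.C ((-1) ^ j * (k.choose j : ℂ)) * (Polynomial.X + Polynomial.C (j:ℂ)) ^ n

lemma EPpoly_eval (n : ℕ) (z : ℂ) : (EPpoly n).eval z = eulerPoly n z := by
  unfold EPpoly eulerPoly
  rw [Polynomial.eval_finset_sum]
  refine Finset.sum_congr rfl fun k _ => ?_
  rw [Polynomial.eval_mul, Polynomial.eval_C, Polynomial.eval_finset_sum]
  congr 1
  refine Finset.sum_congr rfl fun j _ => ?_
  simp [mul_assoc]

noncomputable def WPpoly (n : ℕ) : Polynomial ℂ :=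
  Polynomial.C ((2:ℂ)^(n+1)/((n:ℂ)+1)) *
    (((Polynomial.bernoulli (n+1)).map (algebraMap ℚ ℂ)).comp
        (Polynomial.C (1/2 : ℂ) * (Polynomial.X + 1))
      - ((Polynomial.bernoulli (n+1)).map (algebraMap ℚ ℂ)).comp
        (Polynomial.C (1/2 : ℂ) * Polynomial.X))

lemma WPpoly_eval (n : ℕ) (x : ℂ) :
    (WPpoly n).eval x
      = (2:ℂ)^(n+1)/((n:ℂ)+1) *
          (bernoulliPoly (n+1) ((x+1)/2) - bernoulliPoly (n+1) (x/2)) := by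
  unfold WPpoly
  simp only [Polynomial.eval_mul, Polynomial.eval_sub, Polynomial.eval_C, Polynomial.eval_comp,
    Polynomial.eval_add, Polynomial.eval_X, Polynomial.eval_one, Polynomial.eval_map]
  rw [show (1/2:ℂ) * (x+1) = (x+1)/2 by ring, show (1/2:ℂ) * x = x/2 by ring]
  unfold bernoulliPoly
  rw [Polynomial.aeval_def, Polynomial.eval₂_eq_eval_map, Polynomial.aeval_def,
    Polynomial.eval₂_eq_eval_map]

lemma poly_zero_of_antiperiodic (p : Polynomial ℂ)
    (h : ∀ x : ℂ, p.eval (x+1) = - p.eval x) : p = 0 := by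
  have h2 : ∀ x : ℂ, p.eval (x+2) = p.eval x := by
    intro x
    rw [show x+2 = x+1+1 by ring, h (x+1), h x, neg_neg]
  have key : ∀ m : ℕ, p.eval (2*(m:ℂ)) = p.eval 0 := by
    intro m
    induction m with
    | zero => norm_num
    | succ m ih =>
      rw [show (2*(((m+1):ℕ):ℂ)) = (2*(m:ℂ)) + 2 by push_cast; ring, h2, ih]
  have hq : p - Polynomial.C (p.eval 0) = 0 := by
    apply Polynomial.eq_zero_of_infinite_isRoot
    apply Set.infinite_of_injective_forall_mem
      (f := fun m : ℕ => (2*(m:ℂ)))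
    · intro a b hab
      simp only at hab
      have : ((a:ℂ)) = b := by
        field_simp at hab
        exact_mod_cast hab
      exact_mod_cast this
    · intro m
      simp only [Set.mem_setOf_eq, Polynomial.IsRoot, Polynomial.eval_sub, Polynomial.eval_C]
      rw [key m, sub_self]
  have hp : p = Polynomial.C (p.eval 0) := by
    rwa [sub_eq_zero] at hq
  have hc : p.eval 0 = - p.eval 0 := by
    have h0 := h 0
    rw [zero_add, hp, Polynomial.eval_C, Polynomial.eval_C] at h0
    exact h0
  have h2c : (2:ℂ) * p.eval 0 = 0 := by linear_combination hc
  have : p.eval 0 = 0 := (mul_eq_zero.mp h2c).resolve_left two_ne_zero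
  rw [hp, this, map_zero]

lemma eulerPoly_eq_bernoulli (n : ℕ) (x : ℂ) :
    eulerPoly n x = (2:ℂ)^(n+1)/((n:ℂ)+1) *
      (bernoulliPoly (n+1) ((x+1)/2) - bernoulliPoly (n+1) (x/2)) := by
  have hW : ∀ x : ℂ, (WPpoly n).eval (x+1) + (WPpoly n).eval x = 2 * x^n := by
    intro x
    rw [WPpoly_eval, WPpoly_eval]
    have h1 : ((x+1)+1)/2 = x/2 + 1 := by ring
    rw [h1, bernoulliPoly_one_add (n+1) (x/2)]
    have hnz : ((n:ℂ)+1) ≠ 0 := Nat.cast_add_one_ne_zero n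
    have h2n : ((2:ℂ))^n ≠ 0 := pow_ne_zero _ two_ne_zero
    simp only [Nat.add_sub_cancel]
    push_cast
    field_simp
    have h12 : ((1:ℂ)/2)^n * 2^n = 1 := by rw [← mul_pow]; norm_num
    linear_combination (x^n * (n:ℂ) * 2 + x^n * 2) * h12
  have hE : ∀ x : ℂ, (EPpoly n).eval (x+1) + (EPpoly n).eval x = 2 * x^n := by
    intro x
    rw [EPpoly_eval, EPpoly_eval]
    exact eulerPoly_funceq n x
  have hdiff : EPpoly n - WPpoly n = 0 := by
    apply poly_zero_of_antiperiodic
    intro x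
    simp only [Polynomial.eval_sub]
    linear_combination hE x - hW x
  have heq : EPpoly n = WPpoly n := by rwa [sub_eq_zero] at hdiff
  rw [← EPpoly_eval, heq, WPpoly_eval]

lemma sum_even_odd (f : ℕ → ℂ) (n : ℕ) :
    ∑ m ∈ range (2*n+1), f m
      = ∑ k ∈ range (n+1), f (2*k) + ∑ k ∈ range n, f (2*k+1) := by
  induction n with
  | zero => simp
  | succ n ih =>
    rw [show 2*(n+1)+1 = (2*n+1)+1+1 by ring, Finset.sum_range_succ, Finset.sum_range_succ, ih,
      Finset.sum_range_succ (fun k => f (2*k)) (n+1), Finset.sum_range_succ (fun k => f (2*k+1)) n]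
    rw [show 2*n+1+1 = 2*(n+1) by ring]
    ring

lemma sum_even_odd' (f : ℕ → ℂ) (n : ℕ) :
    ∑ m ∈ range (2*n+1+1), f m
      = ∑ k ∈ range (n+1), f (2*k) + ∑ k ∈ range (n+1), f (2*k+1) := by
  rw [Finset.sum_range_succ, sum_even_odd, Finset.sum_range_succ (fun k => f (2*k+1)) n]
  ring

lemma rhs_eq (n : ℕ) (z : ℂ) :
    (∑ k ∈ range (n + 1), (2:ℂ)^(2*k) * ((2*n).choose (2*k) : ℂ) * eulerPoly (2*k) (2*z))
      - ∑ k ∈ range n, (2:ℂ)^(2*k+1) * ((2*n).choose (2*k+1) : ℂ) * eulerPoly (2*k+1) (2*z)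
      = 4^n * eulerPoly (2*n) (2*z - 1/2) := by
  have hsplit := sum_even_odd (fun m => (-2:ℂ)^m * ((2*n).choose m : ℂ) * eulerPoly m (2*z)) n
  have heven : ∀ k : ℕ, (-2:ℂ)^(2*k) = 2^(2*k) := by
    intro k
    rw [pow_mul, pow_mul]
    norm_num
  have hodd : ∀ k : ℕ, (-2:ℂ)^(2*k+1) = -(2^(2*k+1)) := by
    intro k
    rw [pow_succ, pow_succ, heven]
    ring
  have hL : (∑ k ∈ range (n + 1), (2:ℂ)^(2*k) * ((2*n).choose (2*k) : ℂ) * eulerPoly (2*k) (2*z))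
      - ∑ k ∈ range n, (2:ℂ)^(2*k+1) * ((2*n).choose (2*k+1) : ℂ) * eulerPoly (2*k+1) (2*z)
      = ∑ m ∈ range (2*n+1), (-2:ℂ)^m * ((2*n).choose m : ℂ) * eulerPoly m (2*z) := by
    rw [hsplit]
    simp only [heven, hodd]
    rw [sub_eq_add_neg, ← Finset.sum_neg_distrib]
    congr 1
    exact Finset.sum_congr rfl fun k _ => by ring
  rw [hL]
  calc ∑ m ∈ range (2*n+1), (-2:ℂ)^m * ((2*n).choose m : ℂ) * eulerPoly m (2*z)
      = ∑ m ∈ range (2*n+1), ∑ k ∈ range (2*n+1),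
          (1/2^k : ℂ) * ((-2:ℂ)^m * ((2*n).choose m : ℂ) * Dk k m (2*z)) := by
        refine Finset.sum_congr rfl fun m hm => ?_
        rw [eulerPoly_ext m (2*n) (by have := mem_range.mp hm; omega), Finset.mul_sum]
        exact Finset.sum_congr rfl fun k _ => by ring
    _ = ∑ k ∈ range (2*n+1), (1/2^k : ℂ) *
          ∑ j ∈ range (k+1), (-1:ℂ)^j * (k.choose j : ℂ) * ((-2)*(2*z+j)+1)^(2*n) := by
        rw [Finset.sum_comm]
        refine Finset.sum_congr rfl fun k _ => ?_
        rw [← Finset.mul_sum]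
        congr 1
        calc ∑ m ∈ range (2*n+1), ((-2:ℂ)^m * ((2*n).choose m : ℂ) * Dk k m (2*z))
            = ∑ m ∈ range (2*n+1), ∑ j ∈ range (k+1),
                (-1:ℂ)^j * (k.choose j : ℂ) *
                  (((-2)*(2*z+j))^m * 1^(2*n-m) * ((2*n).choose m : ℂ)) := by
              refine Finset.sum_congr rfl fun m _ => ?_
              unfold Dk
              rw [Finset.mul_sum]
              refine Finset.sum_congr rfl fun j _ => ?_
              rw [mul_pow]
              ring
          _ = ∑ j ∈ range (k+1), (-1:ℂ)^j * (k.choose j : ℂ) * ((-2)*(2*z+j)+1)^(2*n) := by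
              rw [Finset.sum_comm]
              refine Finset.sum_congr rfl fun j _ => ?_
              rw [← Finset.mul_sum, ← add_pow]
    _ = 4^n * eulerPoly (2*n) (2*z - 1/2) := by
        rw [eulerPoly_eq_Dk (2*n)]
        unfold Dk
        simp only [Finset.mul_sum]
        refine Finset.sum_congr rfl fun k _ => ?_
        refine Finset.sum_congr rfl fun j _ => ?_
        have key : ((-2:ℂ)*(2*z+j)+1)^(2*n) = 4^n * ((2*z - 1/2) + j)^(2*n) := by
          rw [show ((-2:ℂ)*(2*z+j)+1) = (-2) * ((2*z-1/2)+j) by ring, mul_pow,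
            show ((-2:ℂ))^(2*n) = 4^n by rw [pow_mul]; norm_num]
        rw [key]
        ring

lemma bernoulli_sum_plus (n : ℕ) (z : ℂ) :
    ∑ m ∈ range (2*n+1+1), ((2*n+1).choose m : ℂ) * 4^m * bernoulliPoly m z
      = 4^(2*n+1) * bernoulliPoly (2*n+1) (z + 1/4) := by
  rw [bernoulliPoly_add (2*n+1) z (1/4), Finset.mul_sum]
  refine Finset.sum_congr rfl fun m hm => ?_
  have hm' : m ≤ 2*n+1 := by have := mem_range.mp hm; omega
  have h4 : (4:ℂ)^(2*n+1) = 4^m * 4^(2*n+1-m) := by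
    rw [← pow_add]
    congr 1
    omega
  have hone : ((1:ℂ)/4)^(2*n+1-m) * 4^(2*n+1-m) = 1 := by
    rw [← mul_pow]
    norm_num
  symm
  calc (4:ℂ)^(2*n+1) * (((2*n+1).choose m : ℂ) * bernoulliPoly m z * (1/4)^(2*n+1-m))
      = (((2*n+1).choose m : ℂ) * bernoulliPoly m z * 4^m) *
          (((1:ℂ)/4)^(2*n+1-m) * 4^(2*n+1-m)) := by rw [h4]; ring
    _ = ((2*n+1).choose m : ℂ) * 4^m * bernoulliPoly m z := by rw [hone]; ring

lemma bernoulli_sum_minus (n : ℕ) (z : ℂ) :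
    ∑ m ∈ range (2*n+1+1), ((2*n+1).choose m : ℂ) * (-4)^m * bernoulliPoly m z
      = (-4)^(2*n+1) * bernoulliPoly (2*n+1) (z - 1/4) := by
  rw [show z - 1/4 = z + (-(1/4):ℂ) by ring, bernoulliPoly_add (2*n+1) z (-(1/4)), Finset.mul_sum]
  refine Finset.sum_congr rfl fun m hm => ?_
  have hm' : m ≤ 2*n+1 := by have := mem_range.mp hm; omega
  have h4 : ((-4):ℂ)^(2*n+1) = (-4)^m * (-4)^(2*n+1-m) := by
    rw [← pow_add]
    congr 1
    omega
  have hone : ((-(1/4)):ℂ)^(2*n+1-m) * (-4)^(2*n+1-m) = 1 := by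
    rw [← mul_pow]
    norm_num
  symm
  calc ((-4):ℂ)^(2*n+1) * (((2*n+1).choose m : ℂ) * bernoulliPoly m z * (-(1/4))^(2*n+1-m))
      = (((2*n+1).choose m : ℂ) * bernoulliPoly m z * (-4)^m) *
          (((-(1/4)):ℂ)^(2*n+1-m) * (-4)^(2*n+1-m)) := by rw [h4]; ring
    _ = ((2*n+1).choose m : ℂ) * (-4)^m * bernoulliPoly m z := by rw [hone]; ring

lemma lhs_eq (n : ℕ) (z : ℂ) :
    ∑ k ∈ range (n + 1), (4 : ℂ) ^ (2 * k) / (2 * (n - k : ℕ) + 1) *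
        ((2 * n).choose (2 * k) : ℂ) * bernoulliPoly (2 * k) z
      = (4:ℂ)^(2*n+1) / (2*(((2*n:ℕ):ℂ)+1)) *
          (bernoulliPoly (2*n+1) (z+1/4) - bernoulliPoly (2*n+1) (z-1/4)) := by
  have hN1 : (((2*n:ℕ):ℂ)+1) ≠ 0 := Nat.cast_add_one_ne_zero (2*n)
  have h1 : ∀ k ∈ range (n+1),
      (4 : ℂ) ^ (2 * k) / (2 * (n - k : ℕ) + 1) *
          ((2 * n).choose (2 * k) : ℂ) * bernoulliPoly (2 * k) z
        = (1/((((2*n:ℕ)):ℂ)+1)) *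
            (((2*n+1).choose (2*k) : ℂ) * (4:ℂ)^(2*k) * bernoulliPoly (2*k) z) := by
    intro k hk
    have hk' : k ≤ n := by have := mem_range.mp hk; omega
    have hd : (2*(((n-k:ℕ)):ℂ)+1) ≠ 0 := by
      have he : (2*(((n-k:ℕ)):ℂ)+1) = ((2*(n-k)+1 : ℕ) : ℂ) := by push_cast; ring
      rw [he]
      exact Nat.cast_ne_zero.mpr (by omega)
    have hnat : (2*n).choose (2*k) * (2*n+1) = (2*n+1).choose (2*k) * (2*(n-k)+1) := by
      have h0 := Nat.choose_mul_succ_eq (2*n) (2*k)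
      have h2 : 2*n+1-2*k = 2*(n-k)+1 := by omega
      rw [h0, h2]
    have hcast : ((2*n).choose (2*k) : ℂ) * (((2*n:ℕ):ℂ)+1)
        = ((2*n+1).choose (2*k):ℂ) * (2*(((n-k:ℕ)):ℂ)+1) := by
      exact_mod_cast congrArg (Nat.cast : ℕ → ℂ) hnat
    rw [div_mul_eq_mul_div, div_mul_eq_mul_div, one_div_mul_eq_div,
      div_eq_div_iff hd hN1]
    linear_combination ((4:ℂ)^(2*k) * bernoulliPoly (2*k) z) * hcast
  have hsplitP := sum_even_odd' (fun m => ((2*n+1).choose m : ℂ) * 4^m * bernoulliPoly m z) n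
  have hsplitM := sum_even_odd' (fun m => ((2*n+1).choose m : ℂ) * (-4)^m * bernoulliPoly m z) n
  have heven : ∀ k : ℕ, ((-4):ℂ)^(2*k) = 4^(2*k) := by
    intro k; rw [pow_mul, pow_mul]; norm_num
  have hodd : ∀ k : ℕ, ((-4):ℂ)^(2*k+1) = -(4^(2*k+1)) := by
    intro k; rw [pow_succ, pow_succ, heven]; ring
  have e1 := bernoulli_sum_plus n z
  rw [hsplitP] at e1
  have e2 := bernoulli_sum_minus n z
  rw [hsplitM] at e2
  simp only [heven, hodd] at e2
  rw [show (∑ k ∈ range (n+1),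
        ((2*n+1).choose (2*k+1) : ℂ) * -(4^(2*k+1)) * bernoulliPoly (2*k+1) z)
      = -∑ k ∈ range (n+1),
        ((2*n+1).choose (2*k+1) : ℂ) * 4^(2*k+1) * bernoulliPoly (2*k+1) z by
    rw [← Finset.sum_neg_distrib]
    exact Finset.sum_congr rfl fun k _ => by ring] at e2
  have hS : ∑ k ∈ range (n+1),
        ((2*n+1).choose (2*k) : ℂ) * (4:ℂ)^(2*k) * bernoulliPoly (2*k) z
      = (4^(2*n+1) * bernoulliPoly (2*n+1) (z+1/4)
          - 4^(2*n+1) * bernoulliPoly (2*n+1) (z-1/4)) / 2 := by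
    linear_combination (e1 + e2) / 2
  calc ∑ k ∈ range (n + 1), (4 : ℂ) ^ (2 * k) / (2 * (n - k : ℕ) + 1) *
          ((2 * n).choose (2 * k) : ℂ) * bernoulliPoly (2 * k) z
      = ∑ k ∈ range (n+1), (1/((((2*n:ℕ)):ℂ)+1)) *
          (((2*n+1).choose (2*k) : ℂ) * (4:ℂ)^(2*k) * bernoulliPoly (2*k) z) :=
        Finset.sum_congr rfl h1
    _ = (1/((((2*n:ℕ)):ℂ)+1)) * ∑ k ∈ range (n+1),
          ((2*n+1).choose (2*k) : ℂ) * (4:ℂ)^(2*k) * bernoulliPoly (2*k) z :=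
        (Finset.mul_sum _ _ _).symm
    _ = _ := by
        rw [hS]
        field_simp

theorem stmt8 (n : ℕ) (z : ℂ) :
    ∑ k ∈ range (n + 1), (4 : ℂ) ^ (2 * k) / (2 * (n - k : ℕ) + 1) *
        ((2 * n).choose (2 * k) : ℂ) * bernoulliPoly (2 * k) z
      = ∑ k ∈ range (n + 1), (2 : ℂ) ^ (2 * k) * ((2 * n).choose (2 * k) : ℂ) *
          eulerPoly (2 * k) (2 * z)
        - ∑ k ∈ range n, (2 : ℂ) ^ (2 * k + 1) * ((2 * n).choose (2 * k + 1) : ℂ) *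
          eulerPoly (2 * k + 1) (2 * z) := by
  rw [lhs_eq n z, rhs_eq n z, eulerPoly_eq_bernoulli (2*n) (2*z - 1/2),
    show (2*z - 1/2 + 1)/2 = z + 1/4 by ring, show (2*z - 1/2)/2 = z - 1/4 by ring]
  have hN1 : (((2*n:ℕ):ℂ)+1) ≠ 0 := Nat.cast_add_one_ne_zero (2*n)
  have h2 : (4:ℂ)^(2*n+1) = 2 * (4^n * 2^(2*n+1)) := by
    rw [show (4:ℂ) = 2^2 by norm_num, ← pow_mul, ← pow_mul,
      show 2*(2*n+1) = (2*n + (2*n+1)) + 1 by ring, pow_succ, pow_add]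
    ring
  rw [h2, mul_div_mul_left _ _ (two_ne_zero (α := ℂ)), mul_div_assoc]
  ring
end
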